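/- Fix constants l > 0, g > 0, μ > 0, a Lipschitz continuous function a : ℝ → ℝ, and t₀ ≤ t₁. Set p*² = (g + max_{t∈[t₀,t₁]} |a(t)|)·(1 + 1/μ)·(1/l). Then for every t ∈ [t₀,t₁], every q ∈ ℝ and every p with p > 0 and p² > p*², every element (v₁,v₂) of Φ(q,p,t) satisfies v₂ < 0; and for every p with p < 0 and p² > p*², every element (v₁,v₂) of Φ(q,p,t) satisfies v₂ > 0. -/

import Mathlib

open MeasureTheory Set Filter

noncomputable section

/-- The scalar right-hand side of the pendulum equation for the angular velocity, where
`s ∈ [-1, 1]` is the direction of the dry friction force: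
`h (q, p, t, s) = (a t / l)·sin q − (μ / l)·|a t·cos q − l·p² + g·sin q|·s − (g / l)·cos q`. -/
def hRHS (l g μ : ℝ) (a : ℝ → ℝ) (q p t s : ℝ) : ℝ :=
  (a t / l) * Real.sin q - (μ / l) * |a t * Real.cos q - l * p ^ 2 + g * Real.sin q| * s
    - (g / l) * Real.cos q

/-- The pendulum set-valued map `Φ`: a singleton `{(p, h (q, p, t, p / |p|))}` for `p ≠ 0`,
and the segment `{(0, h (q, 0, t, s)) : s ∈ [−1, 1]}` for `p = 0`. -/
def Phi (l g μ : ℝ) (a : ℝ → ℝ) (q p t : ℝ) : Set (ℝ × ℝ) :=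
  if p ≠ 0 then {(p, hRHS l g μ a q p t (p / |p|))}
  else {v : ℝ × ℝ | ∃ s ∈ Set.Icc (-1 : ℝ) 1, v = (0, hRHS l g μ a q 0 t s)}

set_option maxHeartbeats 1000000

/-- **A priori bound on the angular velocity.** Set
`p*² = (g + max_{t ∈ [t₀, t₁]} |a t|)·(1 + 1/μ)·(1/l)`. For every `t ∈ [t₀, t₁]` and every
`q`, if `p > 0` and `p² > p*²` then every element of `Φ (q, p, t)` has negative second
component, and if `p < 0` and `p² > p*²` then every element of `Φ (q, p, t)` has positive
second component. -/
theorem stmt8 (l g μ : ℝ) (hl : 0 < l) (hg : 0 < g) (hμ : 0 < μ)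
    (a : ℝ → ℝ) (K : NNReal) (ha : LipschitzWith K a)
    (t₀ t₁ : ℝ) (ht : t₀ ≤ t₁)
    (pstarSq : ℝ)
    (hpstar : pstarSq = (g + sSup ((fun t => |a t|) '' Set.Icc t₀ t₁)) * (1 + 1 / μ) * (1 / l)) :
    ∀ t ∈ Set.Icc t₀ t₁, ∀ q p : ℝ,
      (p > 0 → p ^ 2 > pstarSq → ∀ v ∈ Phi l g μ a q p t, v.2 < 0) ∧
      (p < 0 → p ^ 2 > pstarSq → ∀ v ∈ Phi l g μ a q p t, v.2 > 0) := by
  set M := sSup ((fun t => |a t|) '' Set.Icc t₀ t₁) with hMdef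
  have hbdd : BddAbove ((fun t => |a t|) '' Set.Icc t₀ t₁) :=
    (isCompact_Icc.image_of_continuousOn (ha.continuous.abs.continuousOn)).bddAbove
  have hM : ∀ t ∈ Set.Icc t₀ t₁, |a t| ≤ M := fun t htm =>
    le_csSup hbdd ⟨t, htm, rfl⟩
  have hM0 : 0 ≤ M := le_trans (abs_nonneg _) (hM t₀ ⟨le_refl _, ht⟩)
  intro t htmem q p
  have hat := hM t htmem
  have hat' := abs_le.mp hat
  have hs : -1 ≤ Real.sin q ∧ Real.sin q ≤ 1 := ⟨Real.neg_one_le_sin q, Real.sin_le_one q⟩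
  have hc : -1 ≤ Real.cos q ∧ Real.cos q ≤ 1 := ⟨Real.neg_one_le_cos q, Real.cos_le_one q⟩
  have h1 : -M ≤ a t * Real.sin q ∧ a t * Real.sin q ≤ M := by
    constructor <;> nlinarith [abs_nonneg (a t), le_abs_self (a t), neg_abs_le (a t)]
  have h2 : -M ≤ a t * Real.cos q ∧ a t * Real.cos q ≤ M := by
    constructor <;> nlinarith [abs_nonneg (a t), le_abs_self (a t), neg_abs_le (a t)]
  have hμinv : μ * (1 / μ) = 1 := by field_simp
  have hb1 : μ * (a t * Real.cos q) ≤ μ * M := mul_le_mul_of_nonneg_left h2.2 hμ.le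
  have hb1' : μ * (-M) ≤ μ * (a t * Real.cos q) := mul_le_mul_of_nonneg_left h2.1 hμ.le
  have hb2 : μ * g * Real.sin q ≤ μ * g * 1 :=
    mul_le_mul_of_nonneg_left hs.2 (mul_pos hμ hg).le
  have hb2' : μ * g * (-1) ≤ μ * g * Real.sin q :=
    mul_le_mul_of_nonneg_left hs.1 (mul_pos hμ hg).le
  constructor
  · intro hp hp2 v hv
    rw [hpstar] at hp2
    have hpne : p ≠ 0 := ne_of_gt hp
    have hlp : (g + M) * (1 + 1 / μ) < l * p ^ 2 := by
      have h := mul_lt_mul_of_pos_left hp2 hl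
      calc (g + M) * (1 + 1/μ) = l * ((g + M) * (1 + 1/μ) * (1/l)) := by
            field_simp
        _ < l * p ^ 2 := h
    have hexp : μ * ((g + M) * (1 + 1 / μ)) = μ * (g + M) + (g + M) := by
      field_simp
    have hkey : μ * (g + M) + (g + M) < μ * (l * p ^ 2) := by
      have h := mul_lt_mul_of_pos_left hlp hμ
      linarith [hexp]
    rw [Phi, if_pos hpne, Set.mem_singleton_iff] at hv
    subst hv
    have habs : p / |p| = 1 := by rw [abs_of_pos hp, div_self hpne]
    simp only [hRHS, habs, mul_one]
    have habsexpr : |a t * Real.cos q - l * p ^ 2 + g * Real.sin q|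
        = l * p ^ 2 - (a t * Real.cos q + g * Real.sin q) := by
      rw [show a t * Real.cos q - l * p ^ 2 + g * Real.sin q
          = -(l * p ^ 2 - (a t * Real.cos q + g * Real.sin q)) by ring, abs_neg]
      apply abs_of_nonneg
      nlinarith [hlp, h2.2, mul_le_mul_of_nonneg_left hs.2 hg.le,
        mul_nonneg (by linarith : (0:ℝ) ≤ g + M) (by positivity : (0:ℝ) ≤ 1/μ)]
    rw [habsexpr]
    have heq : a t / l * Real.sin q - μ / l * (l * p ^ 2 - (a t * Real.cos q + g * Real.sin q))
        - g / l * Real.cos q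
        = (a t * Real.sin q - μ * (l * p ^ 2 - (a t * Real.cos q + g * Real.sin q))
            - g * Real.cos q) / l := by
      field_simp
    rw [heq]
    apply div_neg_of_neg_of_pos _ hl
    nlinarith [hkey, hb1, hb2, h1.2, hc.1]
  · intro hp hp2 v hv
    rw [hpstar] at hp2
    have hpne : p ≠ 0 := ne_of_lt hp
    have hlp : (g + M) * (1 + 1 / μ) < l * p ^ 2 := by
      have h := mul_lt_mul_of_pos_left hp2 hl
      calc (g + M) * (1 + 1/μ) = l * ((g + M) * (1 + 1/μ) * (1/l)) := by
            field_simp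
        _ < l * p ^ 2 := h
    have hexp : μ * ((g + M) * (1 + 1 / μ)) = μ * (g + M) + (g + M) := by
      field_simp
    have hkey : μ * (g + M) + (g + M) < μ * (l * p ^ 2) := by
      have h := mul_lt_mul_of_pos_left hlp hμ
      linarith [hexp]
    rw [Phi, if_pos hpne, Set.mem_singleton_iff] at hv
    subst hv
    have habs : p / |p| = -1 := by
      rw [abs_of_neg hp, div_neg, div_self hpne]
    simp only [hRHS, habs, mul_neg_one]
    have habsexpr : |a t * Real.cos q - l * p ^ 2 + g * Real.sin q|
        = l * p ^ 2 - (a t * Real.cos q + g * Real.sin q) := by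
      rw [show a t * Real.cos q - l * p ^ 2 + g * Real.sin q
          = -(l * p ^ 2 - (a t * Real.cos q + g * Real.sin q)) by ring, abs_neg]
      apply abs_of_nonneg
      nlinarith [hlp, h2.2, mul_le_mul_of_nonneg_left hs.2 hg.le,
        mul_nonneg (by linarith : (0:ℝ) ≤ g + M) (by positivity : (0:ℝ) ≤ 1/μ)]
    rw [habsexpr]
    have heq : a t / l * Real.sin q - -(μ / l * (l * p ^ 2 - (a t * Real.cos q + g * Real.sin q)))
        - g / l * Real.cos q
        = (a t * Real.sin q + μ * (l * p ^ 2 - (a t * Real.cos q + g * Real.sin q))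
            - g * Real.cos q) / l := by
      field_simp; ring
    rw [heq]
    apply div_pos _ hl
    nlinarith [hkey, hb1', hb2', h1.1, hc.2]
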